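/- Let w be a log-convex weight on [0,1). Then there exists a power series with nonnegative coefficients, f(t) = Σ_{k≥0} a_k t^k with a_k ≥ 0, convergent on [0,1), such that f(t) ≍ w(t) on [0,1). -/

import Mathlib

open Set

/-- A log-convex weight: continuous, non-decreasing, strictly positive on `[0,1)`,
and `log w(r)` is a convex function of `log r` on `(0,1)`. -/
def IsLogConvexWeight (w : ℝ → ℝ) : Prop :=
  ContinuousOn w (Set.Ico 0 1) ∧ MonotoneOn w (Set.Ico 0 1) ∧
    (∀ r ∈ Set.Ico (0:ℝ) 1, 0 < w r) ∧
    ConvexOn ℝ (Set.Iio (0:ℝ)) (fun t => Real.log (w (Real.exp t)))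

namespace LCWProof

open Finset

/-- Hypotheses for the unbounded case. -/
structure Wgt (w : ℝ → ℝ) : Prop where
  mono : MonotoneOn w (Set.Ico 0 1)
  pos : ∀ r ∈ Set.Ico (0:ℝ) 1, 0 < w r
  cvx : ConvexOn ℝ (Set.Iio (0:ℝ)) (fun t => Real.log (w (Real.exp t)))
  unb : ∀ B : ℝ, ∃ t ∈ Set.Ico (0:ℝ) 1, B < w t

variable {w : ℝ → ℝ}

noncomputable def M (w : ℝ → ℝ) (k : ℕ) : ℝ :=
  sInf ((fun t => w t / t ^ k) '' Set.Ioo 0 1)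

lemma w0_pos (hw : Wgt w) : 0 < w 0 := hw.pos 0 (by constructor <;> norm_num)

lemma w_pos (hw : Wgt w) {t : ℝ} (ht : t ∈ Set.Ioo (0:ℝ) 1) : 0 < w t :=
  hw.pos t ⟨ht.1.le, ht.2⟩

lemma w0_le (hw : Wgt w) {t : ℝ} (ht : t ∈ Set.Ico (0:ℝ) 1) : w 0 ≤ w t :=
  hw.mono (by constructor <;> norm_num) ht ht.1

lemma elem_lb (hw : Wgt w) (k : ℕ) {t : ℝ} (ht : t ∈ Set.Ioo (0:ℝ) 1) :
    w 0 ≤ w t / t ^ k := by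
  have h1 : (0:ℝ) < t ^ k := pow_pos ht.1 _
  have h2 : t ^ k ≤ 1 := pow_le_one₀ ht.1.le ht.2.le
  have := w0_le hw (⟨ht.1.le, ht.2⟩ : t ∈ Set.Ico (0:ℝ) 1)
  calc w 0 ≤ w t := this
    _ = w t / 1 := by ring
    _ ≤ w t / t ^ k := by
        apply div_le_div_of_nonneg_left (le_of_lt (lt_of_lt_of_le (w0_pos hw) this)) h1 h2

lemma M_bddBelow (hw : Wgt w) (k : ℕ) :
    w 0 ∈ lowerBounds ((fun t => w t / t ^ k) '' Set.Ioo 0 1) := by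
  rintro y ⟨t, ht, rfl⟩; exact elem_lb hw k ht

lemma M_nonempty (k : ℕ) : ((fun t => w t / t ^ k) '' Set.Ioo (0:ℝ) 1).Nonempty :=
  ⟨_, ⟨(1:ℝ)/2, by constructor <;> norm_num, rfl⟩⟩

lemma M_ge (hw : Wgt w) (k : ℕ) : w 0 ≤ M w k :=
  le_csInf (M_nonempty k) (M_bddBelow hw k)

lemma M_pos (hw : Wgt w) (k : ℕ) : 0 < M w k := lt_of_lt_of_le (w0_pos hw) (M_ge hw k)

lemma M_le (hw : Wgt w) (k : ℕ) {t : ℝ} (ht : t ∈ Set.Ioo (0:ℝ) 1) :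
    M w k ≤ w t / t ^ k :=
  csInf_le ⟨w 0, M_bddBelow hw k⟩ ⟨t, ht, rfl⟩

lemma M_mul_le (hw : Wgt w) (k : ℕ) {t : ℝ} (ht : t ∈ Set.Ioo (0:ℝ) 1) :
    M w k * t ^ k ≤ w t := by
  have h1 : (0:ℝ) < t ^ k := pow_pos ht.1 _
  have := M_le hw k ht
  calc M w k * t ^ k ≤ (w t / t ^ k) * t ^ k := by
        exact mul_le_mul_of_nonneg_right this h1.le
    _ = w t := by field_simp

lemma M_ge_of_forall (hw : Wgt w) (k : ℕ) {c : ℝ}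
    (h : ∀ t ∈ Set.Ioo (0:ℝ) 1, c ≤ w t / t ^ k) : c ≤ M w k :=
  le_csInf (M_nonempty k) (by rintro y ⟨t, ht, rfl⟩; exact h t ht)

lemma M_mono (hw : Wgt w) (k : ℕ) : M w k ≤ M w (k + 1) := by
  apply M_ge_of_forall hw
  intro t ht
  have h1 : (0:ℝ) < t ^ k := pow_pos ht.1 _
  have h2 : (0:ℝ) < t ^ (k+1) := pow_pos ht.1 _
  calc M w k ≤ w t / t ^ k := M_le hw k ht
    _ ≤ w t / t ^ (k+1) := by
        apply div_le_div_of_nonneg_left (le_of_lt (w_pos hw ht)) h2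
        calc t ^ (k+1) = t ^ k * t := by ring
          _ ≤ t ^ k * 1 := by
            exact mul_le_mul_of_nonneg_left ht.2.le h1.le
          _ = t ^ k := by ring

lemma M_mono' (hw : Wgt w) {j k : ℕ} (h : j ≤ k) : M w j ≤ M w k := by
  induction k with
  | zero => simp_all
  | succ n ih =>
      rcases Nat.lt_or_ge j (n+1) with h' | h'
      · exact le_trans (ih (by omega)) (M_mono hw n)
      · have : j = n + 1 := by omega
        simp [this]

lemma M_concave (hw : Wgt w) (k : ℕ) :
    M w k * M w (k + 2) ≤ M w (k+1) * M w (k+1) := by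
  have key : ∀ t ∈ Set.Ioo (0:ℝ) 1, Real.sqrt (M w k * M w (k+2)) ≤ w t / t ^ (k+1) := by
    intro t ht
    have htp : (0:ℝ) < t := ht.1
    have h1 : (0:ℝ) < t ^ (k+1) := pow_pos htp _
    have hwt : 0 < w t := w_pos hw ht
    have e1 : M w k * M w (k+2) ≤ (w t / t^k) * (w t / t^(k+2)) :=
      mul_le_mul (M_le hw k ht) (M_le hw (k+2) ht) (M_pos hw (k+2)).le
        (le_trans (w0_pos hw).le (le_trans (w0_le hw ⟨htp.le, ht.2⟩)
          (by
            have : (0:ℝ) < t ^ k := pow_pos htp _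
            rw [le_div_iff₀ this]
            nlinarith [pow_le_one₀ htp.le ht.2.le (n := k)])))
    have e2 : (w t / t^k) * (w t / t^(k+2)) = (w t / t^(k+1))^2 := by
      have : t ≠ 0 := ne_of_gt htp
      field_simp
      ring
    have e3 : M w k * M w (k+2) ≤ (w t / t^(k+1))^2 := by rw [← e2]; exact e1
    calc Real.sqrt (M w k * M w (k+2)) ≤ Real.sqrt ((w t / t^(k+1))^2) :=
          Real.sqrt_le_sqrt e3
      _ = w t / t^(k+1) := Real.sqrt_sq (by positivity)
  have h2 : Real.sqrt (M w k * M w (k+2)) ≤ M w (k+1) := M_ge_of_forall hw _ key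
  have h3 : 0 ≤ M w k * M w (k+2) := mul_nonneg (M_pos hw k).le (M_pos hw (k+2)).le
  calc M w k * M w (k+2) = Real.sqrt (M w k * M w (k+2)) ^ 2 := (Real.sq_sqrt h3).symm
    _ ≤ M w (k+1) ^ 2 := by
        apply pow_le_pow_left₀ (Real.sqrt_nonneg _) h2
    _ = M w (k+1) * M w (k+1) := sq (M w (k+1))

lemma M_unb (hw : Wgt w) (B : ℝ) : ∃ k, B ≤ M w k := by
  set B' := max B (w 0) with hB'
  obtain ⟨t₀, ht₀, hwt₀⟩ := hw.unb B'
  have hB'w : w 0 ≤ B' := le_max_right _ _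
  have ht0pos : 0 < t₀ := by
    rcases eq_or_lt_of_le ht₀.1 with h | h
    · exfalso; rw [← h] at hwt₀; exact absurd hwt₀ (not_lt.2 hB'w)
    · exact h
  have ht01 : t₀ ∈ Set.Ioo (0:ℝ) 1 := ⟨ht0pos, ht₀.2⟩
  have hB'pos : 0 < B' := lt_of_lt_of_le (w0_pos hw) hB'w
  obtain ⟨k, hk⟩ := exists_pow_lt_of_lt_one (div_pos (w0_pos hw) hB'pos) ht₀.2
  refine ⟨k, le_trans (le_max_left B (w 0)) ?_⟩
  apply M_ge_of_forall hw (c := B')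
  intro s hs
  have hsp : (0:ℝ) < s := hs.1
  have hsk : (0:ℝ) < s ^ k := pow_pos hsp _
  rcases le_or_gt s t₀ with h | h
  · have h1 : s ^ k ≤ t₀ ^ k := pow_le_pow_left₀ hsp.le h k
    have h2 : s ^ k < w 0 / B' := lt_of_le_of_lt h1 hk
    have h3 : w 0 ≤ w s := w0_le hw ⟨hsp.le, hs.2⟩
    rw [le_div_iff₀ hsk]
    calc B' * s ^ k ≤ B' * (w 0 / B') := by
          apply mul_le_mul_of_nonneg_left (le_of_lt h2) hB'pos.le
      _ = w 0 := by field_simp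
      _ ≤ w s := h3
  · have h3 : w t₀ ≤ w s := hw.mono ⟨ht0pos.le, ht₀.2⟩ ⟨hsp.le, hs.2⟩ h.le
    have h4 : s ^ k ≤ 1 := pow_le_one₀ hsp.le hs.2.le
    rw [le_div_iff₀ hsk]
    calc B' * s ^ k ≤ B' * 1 := mul_le_mul_of_nonneg_left h4 hB'pos.le
      _ = B' := by ring
      _ ≤ w t₀ := hwt₀.le
      _ ≤ w s := h3

/-- logarithmic increments of `M`. -/
noncomputable def l (w : ℝ → ℝ) (k : ℕ) : ℝ :=
  Real.log (M w (k + 1)) - Real.log (M w k)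

noncomputable def G (w : ℝ → ℝ) (k : ℕ) : ℝ := Real.log (M w k)

lemma l_nonneg (hw : Wgt w) (k : ℕ) : 0 ≤ l w k :=
  sub_nonneg.2 (Real.log_le_log (M_pos hw k) (M_mono hw k))

lemma l_anti_succ (hw : Wgt w) (k : ℕ) : l w (k+1) ≤ l w k := by
  have h := M_concave hw k
  have h1 : Real.log (M w k * M w (k+2)) ≤ Real.log (M w (k+1) * M w (k+1)) :=
    Real.log_le_log (mul_pos (M_pos hw k) (M_pos hw (k+2))) h
  rw [Real.log_mul (ne_of_gt (M_pos hw k)) (ne_of_gt (M_pos hw (k+2))),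
      Real.log_mul (ne_of_gt (M_pos hw (k+1))) (ne_of_gt (M_pos hw (k+1)))] at h1
  unfold l
  linarith

lemma l_anti (hw : Wgt w) {j k : ℕ} (h : j ≤ k) : l w k ≤ l w j := by
  induction k with
  | zero => simp_all
  | succ n ih =>
      rcases Nat.lt_or_ge j (n+1) with h' | h'
      · exact le_trans (l_anti_succ hw n) (ih (by omega))
      · have : j = n + 1 := by omega
        simp [this]

lemma sum_l (p N : ℕ) : ∑ i ∈ range N, l w (p + i) = G w (p + N) - G w p := by
  have h : ∀ i, l w (p + i) = (fun j => G w (p + j)) (i+1) - (fun j => G w (p+j)) i := by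
    intro i
    show Real.log (M w (p + i + 1)) - Real.log (M w (p + i))
      = Real.log (M w (p + (i+1))) - Real.log (M w (p + i))
    rw [Nat.add_assoc]
  calc ∑ i ∈ range N, l w (p + i)
      = ∑ i ∈ range N, ((fun j => G w (p + j)) (i+1) - (fun j => G w (p+j)) i) := by
        apply Finset.sum_congr rfl; intro i _; exact h i
    _ = G w (p + N) - G w (p + 0) := Finset.sum_range_sub (fun j => G w (p + j)) N
    _ = G w (p + N) - G w p := by rw [Nat.add_zero]

lemma l_unb (hw : Wgt w) (p : ℕ) (A : ℝ) : ∃ N, A ≤ ∑ i ∈ range N, l w (p + i) := by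
  obtain ⟨k, hk⟩ := M_unb hw (M w p * Real.exp A)
  rcases le_or_gt k p with h | h
  · refine ⟨0, ?_⟩
    simp only [range_zero, Finset.sum_empty]
    have h1 : M w p * Real.exp A ≤ M w p := le_trans hk (M_mono' hw h)
    have h2 : Real.exp A ≤ 1 := by
      have hp := M_pos hw p
      nlinarith [Real.exp_pos A]
    have := Real.exp_le_one_iff.mp h2
    linarith
  · refine ⟨k - p, ?_⟩
    rw [sum_l p (k-p)]
    have hpk : p + (k - p) = k := by omega
    rw [hpk]
    have h1 : Real.log (M w p * Real.exp A) ≤ Real.log (M w k) :=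
      Real.log_le_log (mul_pos (M_pos hw p) (Real.exp_pos A)) hk
    rw [Real.log_mul (ne_of_gt (M_pos hw p)) (ne_of_gt (Real.exp_pos A)),
      Real.log_exp] at h1
    unfold G
    linarith

lemma l_to0 (hw : Wgt w) {ε : ℝ} (hε : 0 < ε) : ∃ R, l w R < ε := by
  by_contra hcon
  push_neg at hcon
  set t : ℝ := Real.exp (-(ε/2)) with htdef
  have ht : t ∈ Set.Ioo (0:ℝ) 1 := by
    constructor
    · exact Real.exp_pos _
    · rw [htdef]
      apply Real.exp_lt_one_iff.mpr
      linarith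
  have hwt : 0 < w t := w_pos hw ht
  have hM0 : 0 < M w 0 := M_pos hw 0
  obtain ⟨n, hn⟩ := exists_nat_gt ((w t / M w 0) / (ε/2))
  have hsum : (n:ℝ) * ε ≤ ∑ i ∈ range n, l w (0+i) := by
    calc (n:ℝ)*ε = ∑ _i ∈ range n, ε := by rw [Finset.sum_const, card_range, nsmul_eq_mul]
      _ ≤ ∑ i ∈ range n, l w (0+i) := Finset.sum_le_sum fun i _ => hcon (0+i)
  rw [sum_l 0 n] at hsum
  simp only [Nat.zero_add] at hsum
  have h1 : M w 0 * Real.exp ((n:ℝ)*ε) ≤ M w n := by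
    have h0 : Real.log (M w 0) + (n:ℝ)*ε ≤ Real.log (M w n) := by
      unfold G at hsum; linarith
    calc M w 0 * Real.exp ((n:ℝ)*ε)
        = Real.exp (Real.log (M w 0) + (n:ℝ)*ε) := by
          rw [Real.exp_add, Real.exp_log hM0]
      _ ≤ Real.exp (Real.log (M w n)) := Real.exp_le_exp.2 h0
      _ = M w n := Real.exp_log (M_pos hw n)
  have h2 : M w n * t ^ n ≤ w t := M_mul_le hw n ht
  have h3 : t ^ n = Real.exp ((n:ℝ) * (-(ε/2))) := by
    rw [htdef, ← Real.exp_nat_mul]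
  have h4 : M w 0 * Real.exp ((n:ℝ)*(ε/2)) ≤ M w n * t ^ n := by
    rw [h3]
    have e : Real.exp ((n:ℝ)*(ε/2)) = Real.exp ((n:ℝ)*ε) * Real.exp ((n:ℝ) * (-(ε/2))) := by
      rw [← Real.exp_add]; ring_nf
    rw [e, ← mul_assoc]
    exact mul_le_mul_of_nonneg_right h1 (Real.exp_pos _).le
  have h5 : (n:ℝ)*(ε/2) + 1 ≤ Real.exp ((n:ℝ)*(ε/2)) := Real.add_one_le_exp _
  have h6 : (w t / M w 0) < (n:ℝ) * (ε/2) := by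
    rw [div_lt_iff₀ (by positivity : (0:ℝ) < ε/2)] at hn
    linarith
  have h7 : w t < M w 0 * ((n:ℝ)*(ε/2)) := by
    rw [div_lt_iff₀ hM0] at h6
    linarith
  nlinarith

/-- pairing sum between indices `p` and `q`. -/
noncomputable def P (w : ℝ → ℝ) (p q : ℕ) : ℝ :=
  ∑ i ∈ range ((q - p) / 2), (l w (p + i) - l w (q - 1 - i))

lemma P_term_nonneg (hw : Wgt w) {p q i : ℕ} (hpq : p < q) (hi : i < (q - p)/2) :
    0 ≤ l w (p + i) - l w (q - 1 - i) := by
  have : p + i ≤ q - 1 - i := by omega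
  exact sub_nonneg.2 (l_anti hw this)

lemma P_exists (hw : Wgt w) (p : ℕ) : ∃ q, p < q ∧ 1 ≤ P w p q := by
  obtain ⟨N₀, hN₀⟩ := l_unb hw p 2
  set N := max N₀ 1 with hNdef
  have hN1 : 1 ≤ N := le_max_right _ _
  have hN : 2 ≤ ∑ i ∈ range N, l w (p+i) := by
    refine le_trans hN₀ (Finset.sum_le_sum_of_subset_of_nonneg
      (Finset.range_subset_range.2 (le_max_left _ _)) fun i _ _ => l_nonneg hw _)
  obtain ⟨R, hR⟩ := l_to0 hw (show (0:ℝ) < 1/N by positivity)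
  refine ⟨p + 2*N + 2*R, by omega, ?_⟩
  set q := p + 2*N + 2*R with hq
  have hpq : p < q := by omega
  have hh : (q - p)/2 = N + R := by omega
  rw [P, hh]
  have key : 1 ≤ ∑ i ∈ range N, (l w (p + i) - l w (q - 1 - i)) := by
    rw [Finset.sum_sub_distrib]
    have hb : ∑ i ∈ range N, l w (q-1-i) ≤ ∑ _i ∈ range N, (1/(N:ℝ)) := by
      apply Finset.sum_le_sum
      intro i hi
      have hiN : i < N := Finset.mem_range.1 hi
      have : R ≤ q - 1 - i := by omega
      exact le_of_lt (lt_of_le_of_lt (l_anti hw this) hR)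
    have hb2 : ∑ _i ∈ range N, (1/(N:ℝ)) = 1 := by
      rw [Finset.sum_const, card_range, nsmul_eq_mul]
      field_simp
    linarith [hb, hN]
  refine le_trans key (Finset.sum_le_sum_of_subset_of_nonneg
    (Finset.range_subset_range.2 (by omega)) ?_)
  intro i hi _
  have hi' := Finset.mem_range.1 hi
  exact P_term_nonneg hw hpq (by omega)

noncomputable def nxt (hw : Wgt w) (p : ℕ) : ℕ :=
  @Nat.find (fun q => p < q ∧ 1 ≤ P w p q) (Classical.decPred _) (P_exists hw p)

noncomputable def sel (hw : Wgt w) : ℕ → ℕ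
  | 0 => 0
  | (j+1) => nxt hw (sel hw j)

lemma nxt_spec (hw : Wgt w) (p : ℕ) : p < nxt hw p ∧ 1 ≤ P w p (nxt hw p) :=
  @Nat.find_spec (fun q => p < q ∧ 1 ≤ P w p q) (Classical.decPred _) (P_exists hw p)

lemma nxt_min (hw : Wgt w) (p q : ℕ) (h1 : p < q) (h2 : q < nxt hw p) : P w p q < 1 := by
  have h3 := @Nat.find_min (fun q => p < q ∧ 1 ≤ P w p q) (Classical.decPred _) (P_exists hw p) q h2
  rw [not_and] at h3
  exact lt_of_not_ge fun hge => h3 h1 hge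

lemma sel_zero (hw : Wgt w) : sel hw 0 = 0 := rfl

lemma sel_lt (hw : Wgt w) (j : ℕ) : sel hw j < sel hw (j + 1) := (nxt_spec hw _).1

lemma sel_mono (hw : Wgt w) : StrictMono (sel hw) :=
  strictMono_nat_of_lt_succ (sel_lt hw)

lemma sel_ge (hw : Wgt w) (j : ℕ) : j ≤ sel hw j := by
  induction j with
  | zero => simp [sel_zero]
  | succ n ih => have := sel_lt hw n; omega

/-- the coefficients. -/
noncomputable def a (hw : Wgt w) (k : ℕ) : ℝ :=
  @ite _ (∃ j, sel hw j = k) (Classical.dec _) (M w k) 0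

lemma a_nonneg (hw : Wgt w) (k : ℕ) : 0 ≤ a hw k := by
  unfold a; split
  · exact (M_pos hw k).le
  · exact le_refl 0

lemma a_zero (hw : Wgt w) : a hw 0 = M w 0 := by
  unfold a; rw [if_pos ⟨0, sel_zero hw⟩]

/-- Generic tool: an injection with termwise domination bounds a sum by a sum
of nonnegative terms. -/
lemma sum_map_le {g f : ℕ → ℝ} {a b : ℕ} (σ : ℕ → ℕ)
    (hinj : ∀ i < a, ∀ j < a, σ i = σ j → i = j)
    (hmem : ∀ i < a, σ i < b)
    (hf : ∀ j < b, 0 ≤ f j)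
    (hgf : ∀ i < a, g i ≤ f (σ i)) :
    ∑ i ∈ range a, g i ≤ ∑ j ∈ range b, f j := by
  have h1 : ∑ i ∈ range a, g i ≤ ∑ i ∈ range a, f (σ i) :=
    Finset.sum_le_sum fun i hi => hgf i (Finset.mem_range.1 hi)
  have h2 : ∑ i ∈ range a, f (σ i) = ∑ j ∈ (range a).image σ, f j := by
    rw [Finset.sum_image (fun i hi j hj h =>
      hinj i (Finset.mem_range.1 hi) j (Finset.mem_range.1 hj) h)]
  have h3 : (range a).image σ ⊆ range b := by
    intro j hj
    obtain ⟨i, hi, rfl⟩ := Finset.mem_image.1 hj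
    exact Finset.mem_range.2 (hmem i (Finset.mem_range.1 hi))
  calc ∑ i ∈ range a, g i ≤ ∑ i ∈ range a, f (σ i) := h1
    _ = ∑ j ∈ (range a).image σ, f j := h2
    _ ≤ ∑ j ∈ range b, f j := Finset.sum_le_sum_of_subset_of_nonneg h3
        (fun j hj _ => hf j (Finset.mem_range.1 hj))

lemma Lk_telescope (p q : ℕ) (x : ℝ) (h : p ≤ q) :
    (G w q + q * x) - (G w p + p * x) = ∑ i ∈ range (q - p), (l w (p + i) + x) := by
  rw [Finset.sum_add_distrib, sum_l p (q-p), Finset.sum_const, card_range, nsmul_eq_mul]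
  have h1 : p + (q - p) = q := by omega
  rw [h1]
  have h2 : ((q - p : ℕ) : ℝ) = (q:ℝ) - (p:ℝ) := by
    rw [Nat.cast_sub h]
  rw [h2]; ring

lemma incr_right (hw : Wgt w) {p q m : ℕ} {x : ℝ} (hmp : m ≤ p) (hpq : p < q)
    (hP : 1 ≤ P w p q) (hm : l w m < -x) :
    G w q + q * x + 1 ≤ G w p + p * x := by
  have key : P w p q ≤ ∑ i ∈ range (q-p), (-x - l w (p+i)) := by
    unfold P
    apply sum_map_le (fun i => (q-p) - 1 - i)
    · intro i hi j hj hij; omega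
    · intro i hi; omega
    · intro i hi
      have h2 : l w (p+i) ≤ l w m := l_anti hw (by omega)
      linarith [lt_of_le_of_lt h2 hm]
    · intro i hi
      have e1 : p + ((q-p) - 1 - i) = q - 1 - i := by omega
      rw [e1]
      have h2 : l w (p+i) ≤ l w m := l_anti hw (by omega)
      have h3 : 0 ≤ l w (q-1-i) := l_nonneg hw _
      have h4 : l w (p+i) ≤ -x := le_of_lt (lt_of_le_of_lt h2 hm)
      linarith
  have htel := Lk_telescope (w := w) p q x hpq.le
  have e2 : ∑ i ∈ range (q-p), (-x - l w (p+i)) + ∑ i ∈ range (q-p), (l w (p+i) + x) = 0 := by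
    rw [← Finset.sum_add_distrib]
    apply Finset.sum_eq_zero; intros; ring
  linarith

lemma incr_left (hw : Wgt w) {p q m : ℕ} {x : ℝ} (hqm : q ≤ m) (hpq : p < q)
    (hP : 1 ≤ P w p q) (hm' : ∀ k < m, -x ≤ l w k) :
    G w p + p * x + 1 ≤ G w q + q * x := by
  have key : P w p q ≤ ∑ i ∈ range (q-p), (l w (p+i) + x) := by
    unfold P
    apply sum_map_le (fun i => i)
    · intro i _ j _ h; exact h
    · intro i hi; omega
    · intro i hi
      have := hm' (p+i) (by omega)
      linarith
    · intro i hi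
      have h2 := hm' (q-1-i) (by omega)
      linarith
  have htel := Lk_telescope (w := w) p q x hpq.le
  linarith

lemma deficiency (hw : Wgt w) {p q m : ℕ} {x : ℝ} (hpm : p < m) (hmq : m < q)
    (hmin : P w p (q-1) < 1) (hm' : ∀ k < m, -x ≤ l w k) (hm : l w m < -x) :
    (G w m + m * x) - (G w p + p * x) ≤ 1 + l w 0 ∨
    (G w m + m * x) - (G w q + q * x) ≤ 1 + l w 0 := by
  have hl0 : 0 ≤ l w 0 := l_nonneg hw 0
  have hpq1 : p < q - 1 := by omega
  have hq2 : p + 2 ≤ q := by omega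
  rcases le_or_gt (m - p) ((q - 1 - p)/2) with hcase | hcase
  · -- Case A : use the left neighbour p
    left
    have htel := Lk_telescope (w := w) p m x hpm.le
    have key : ∑ i ∈ range (m-p), (l w (p+i) + x) ≤ P w p (q-1) := by
      unfold P
      apply sum_map_le (fun i => i)
      · intro i _ j _ h; exact h
      · intro i hi; omega
      · intro i hi
        exact P_term_nonneg hw hpq1 (by omega)
      · intro i hi
        have e1 : q - 1 - 1 - i = q - 2 - i := by omega
        rw [e1]
        have h2 : l w (q-2-i) ≤ l w m := l_anti hw (by omega)
        have h3 : l w (q-2-i) ≤ -x := le_of_lt (lt_of_le_of_lt h2 hm)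
        linarith
    linarith
  · -- Case B : use the right neighbour q
    right
    have htel := Lk_telescope (w := w) m q x hmq.le
    have e2 : ∑ i ∈ range (q-m), (-x - l w (m+i)) + ∑ i ∈ range (q-m), (l w (m+i) + x) = 0 := by
      rw [← Finset.sum_add_distrib]
      apply Finset.sum_eq_zero; intros; ring
    have hqm1 : 1 ≤ q - m := by omega
    have e0 : ∑ i ∈ range (q-m), (-x - l w (m+i))
        = (∑ i ∈ range (q-m-1), (-x - l w (m+i))) + (-x - l w (m+(q-m-1))) := by
      have h5 : q - m = (q - m - 1) + 1 := by omega
      calc ∑ i ∈ range (q-m), (-x - l w (m+i))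
          = ∑ i ∈ range ((q-m-1)+1), (-x - l w (m+i)) := by rw [← h5]
        _ = _ := Finset.sum_range_succ _ _
    have hlast : -x - l w (m+(q-m-1)) ≤ l w 0 := by
      have h1 : -x ≤ l w (m-1) := hm' (m-1) (by omega)
      have h2 : l w (m-1) ≤ l w 0 := l_anti hw (by omega)
      have h3 : 0 ≤ l w (m + (q-m-1)) := l_nonneg hw _
      linarith
    have hrest : ∑ i ∈ range (q-m-1), (-x - l w (m+i)) ≤ P w p (q-1) := by
      unfold P
      apply sum_map_le (fun i => q - 2 - m - i)
      · intro i hi j hj hij; omega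
      · intro i hi; omega
      · intro i hi
        exact P_term_nonneg hw hpq1 (by omega)
      · intro i hi
        have e1 : q - 1 - 1 - (q - 2 - m - i) = m + i := by omega
        rw [e1]
        have h2 : -x ≤ l w (p + (q - 2 - m - i)) := hm' _ (by omega)
        linarith
    linarith

lemma pivot (hw : Wgt w) {x : ℝ} (hx : x < 0) :
    ∃ m, (∀ k < m, -x ≤ l w k) ∧ l w m < -x := by
  obtain ⟨R, hR⟩ := l_to0 hw (show (0:ℝ) < -x by linarith)
  have hex : ∃ k, l w k < -x := ⟨R, hR⟩
  refine ⟨@Nat.find _ (Classical.decPred _) hex, ?_, @Nat.find_spec _ (Classical.decPred _) hex⟩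
  intro k hk
  have := @Nat.find_min _ (Classical.decPred _) hex k hk
  linarith [not_lt.1 this]

lemma maxLk (hw : Wgt w) {x : ℝ} {m : ℕ} (hm' : ∀ k < m, -x ≤ l w k) (hm : l w m < -x) :
    ∀ k, G w k + k * x ≤ G w m + m * x := by
  intro k
  rcases le_or_gt k m with h | h
  · have htel := Lk_telescope (w := w) k m x h
    have h0 : 0 ≤ ∑ i ∈ range (m-k), (l w (k+i) + x) := by
      apply Finset.sum_nonneg; intro i hi
      have hi' := Finset.mem_range.1 hi
      have := hm' (k+i) (by omega)
      linarith
    linarith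
  · have htel := Lk_telescope (w := w) m k x h.le
    have h0 : ∑ i ∈ range (k-m), (l w (m+i) + x) ≤ 0 := by
      apply Finset.sum_nonpos; intro i hi
      have h2 : l w (m+i) ≤ l w m := l_anti hw (by omega)
      linarith
    linarith

lemma expform (hw : Wgt w) {t : ℝ} (ht : 0 < t) (k : ℕ) :
    M w k * t ^ k = Real.exp (G w k + k * Real.log t) := by
  unfold G
  rw [Real.exp_add, Real.exp_log (M_pos hw k), Real.exp_nat_mul, Real.exp_log ht]

lemma geo_bound (n : ℕ) : ∑ i ∈ range n, Real.exp (-(1:ℝ)) ^ i ≤ 2 := by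
  have h2 : (2:ℝ) ≤ Real.exp 1 := by
    have := Real.add_one_le_exp (1:ℝ); linarith
  have h1 : Real.exp (-(1:ℝ)) ≤ 1/2 := by
    rw [Real.exp_neg]
    rw [inv_le_comm₀ (Real.exp_pos 1) (by norm_num : (0:ℝ) < 1/2)]
    calc (1/2 : ℝ)⁻¹ = 2 := by norm_num
      _ ≤ Real.exp 1 := h2
  calc ∑ i ∈ range n, Real.exp (-(1:ℝ)) ^ i ≤ ∑ i ∈ range n, (1/2:ℝ)^i :=
        Finset.sum_le_sum fun i _ => pow_le_pow_left₀ (Real.exp_pos _).le h1 i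
    _ ≤ 2 := sum_geometric_two_le n

noncomputable def phi (w : ℝ → ℝ) (u : ℝ) : ℝ := Real.log (w (Real.exp u))

lemma phi_mono (hw : Wgt w) {u v : ℝ} (huv : u ≤ v) (hv : v < 0) :
    phi w u ≤ phi w v := by
  have hu : u < 0 := lt_of_le_of_lt huv hv
  have hmemu : Real.exp u ∈ Set.Ioo (0:ℝ) 1 :=
    ⟨Real.exp_pos u, Real.exp_lt_one_iff.mpr hu⟩
  have hmemv : Real.exp v ∈ Set.Ioo (0:ℝ) 1 :=
    ⟨Real.exp_pos v, Real.exp_lt_one_iff.mpr hv⟩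
  exact Real.log_le_log (w_pos hw hmemu)
    (hw.mono ⟨(Real.exp_pos u).le, hmemu.2⟩ ⟨(Real.exp_pos v).le, hmemv.2⟩
      (Real.exp_le_exp.2 huv))

lemma chord (hw : Wgt w) {t : ℝ} (ht : t ∈ Set.Ioo (0:ℝ) 1) (h1 : Real.exp (-1) ≤ t) :
    ∃ k : ℕ, t * w t ≤ M w k * t ^ k := by
  have hcvx : ConvexOn ℝ (Set.Iio (0:ℝ)) (phi w) := hw.cvx
  set x := Real.log t with hxdef
  have hx0 : x < 0 := Real.log_neg ht.1 ht.2
  set x₀ := x/2 with hx₀def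
  have hxx₀ : x < x₀ := by rw [hx₀def]; linarith
  have hx₀0 : x₀ < 0 := by rw [hx₀def]; linarith
  set c₀ := (phi w x₀ - phi w x)/(x₀ - x) with hc₀
  have hc₀0 : 0 ≤ c₀ :=
    div_nonneg (sub_nonneg.2 (phi_mono hw hxx₀.le hx₀0)) (by linarith)
  set δ := (-x)/(4*(c₀+1)) with hδdef
  have hδ0 : 0 < δ := div_pos (by linarith) (by linarith)
  have hδ1 : δ ≤ (-x)/4 := by
    rw [hδdef]
    apply div_le_div_of_nonneg_left (by linarith) (by linarith) (by linarith)
  set x' := x + δ with hx'def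
  have hxx' : x < x' := by rw [hx'def]; linarith
  have hx'x₀ : x' < x₀ := by rw [hx'def, hx₀def]; linarith
  have hx'0 : x' < 0 := by linarith
  set c := (phi w x' - phi w x)/(x' - x) with hcdef
  have hc0 : 0 ≤ c :=
    div_nonneg (sub_nonneg.2 (phi_mono hw hxx'.le hx'0)) (by linarith)
  have hne : x' - x ≠ 0 := ne_of_gt (by linarith)
  have hcx : c * (x' - x) = phi w x' - phi w x := by
    rw [hcdef, div_mul_cancel₀ _ hne]
  have hcc₀ : c ≤ c₀ := by
    have hadj := hcvx.slope_mono_adjacent (show x ∈ Set.Iio (0:ℝ) from hx0)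
        (show x₀ ∈ Set.Iio (0:ℝ) from hx₀0) hxx' hx'x₀
    have h5 : c ≤ (phi w x₀ - phi w x')/(x₀ - x') := by rw [hcdef]; exact hadj
    have h6 : c * (x₀ - x') ≤ phi w x₀ - phi w x' := by
      rw [le_div_iff₀ (by linarith : (0:ℝ) < x₀ - x')] at h5; linarith
    rw [hc₀, le_div_iff₀ (by linarith : (0:ℝ) < x₀ - x)]
    have e : c * (x₀ - x) = c * (x' - x) + c * (x₀ - x') := by ring
    linarith
  set k := ⌈c⌉₊ with hkdef
  have hk1 : c ≤ (k:ℝ) := Nat.le_ceil c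
  have hk2 : (k:ℝ) < c + 1 := by rw [hkdef]; exact Nat.ceil_lt_add_one hc0
  have hkδ : (k:ℝ) * δ ≤ -x/4 := by
    calc (k:ℝ)*δ ≤ (c₀+1)*δ := by
          apply mul_le_mul_of_nonneg_right (by linarith) hδ0.le
      _ = (c₀+1) * ((-x)/(4*(c₀+1))) := by rw [hδdef]
      _ = -x/4 := by field_simp
  have main : ∀ y : ℝ, y < 0 → phi w x + x + k*(y - x) ≤ phi w y := by
    intro y hy
    rcases lt_trichotomy y x with h | h | h
    · have hadj := hcvx.slope_mono_adjacent (show y ∈ Set.Iio (0:ℝ) from hy)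
          (show x' ∈ Set.Iio (0:ℝ) from hx'0) h hxx'
      have h5 : (phi w x - phi w y)/(x - y) ≤ c := by rw [hcdef]; exact hadj
      have h6 : phi w x - phi w y ≤ c * (x - y) := by
        rw [div_le_iff₀ (by linarith : (0:ℝ) < x - y)] at h5; linarith
      have h7 : c * (x-y) ≤ (k:ℝ) * (x-y) := mul_le_mul_of_nonneg_right hk1 (by linarith)
      have h8 : (k:ℝ)*(y-x) = -((k:ℝ)*(x-y)) := by ring
      linarith
    · rw [h]
      have : (k:ℝ)*(x-x) = 0 := by ring
      rw [this]; linarith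
    · rcases le_or_gt y x' with h2 | h2
      · have h3 : phi w x ≤ phi w y := phi_mono hw h.le hy
        have h4 : (k:ℝ)*(y-x) ≤ (k:ℝ)*δ := by
          apply mul_le_mul_of_nonneg_left _ (Nat.cast_nonneg k)
          rw [hx'def] at h2; linarith
        linarith
      · have hadj := hcvx.slope_mono_adjacent (show x ∈ Set.Iio (0:ℝ) from hx0)
            (show y ∈ Set.Iio (0:ℝ) from hy) hxx' h2
        have h5 : c ≤ (phi w y - phi w x')/(y - x') := by rw [hcdef]; exact hadj
        have h6 : c * (y - x') ≤ phi w y - phi w x' := by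
          rw [le_div_iff₀ (by linarith : (0:ℝ) < y - x')] at h5; linarith
        have h7 : phi w x + c * (y - x) ≤ phi w y := by
          have e : c*(y-x) = c*(y-x') + c*(x'-x) := by ring
          linarith
        have h8 : (k:ℝ)*(y-x) ≤ c*(y-x) + (y-x) := by
          have := mul_le_mul_of_nonneg_right hk2.le (by linarith : (0:ℝ) ≤ y - x)
          nlinarith
        linarith
  have hwt : 0 < w t := w_pos hw ht
  have hM : t * w t / t^k ≤ M w k := by
    apply M_ge_of_forall hw
    intro s hs
    have hy := main (Real.log s) (Real.log_neg hs.1 hs.2)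
    have hws : 0 < w s := w_pos hw hs
    have e1 : phi w (Real.log s) = Real.log (w s) := by
      rw [phi, Real.exp_log hs.1]
    have e2 : phi w x = Real.log (w t) := by
      rw [phi, hxdef, Real.exp_log ht.1]
    rw [e1, e2] at hy
    have h9 : Real.exp (Real.log (w t) + x + (k:ℝ)*(Real.log s - x)) ≤ w s := by
      calc Real.exp (Real.log (w t) + x + (k:ℝ)*(Real.log s - x))
          ≤ Real.exp (Real.log (w s)) := Real.exp_le_exp.2 hy
        _ = w s := Real.exp_log hws
    have ex : Real.exp x = t := by rw [hxdef, Real.exp_log ht.1]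
    have es : Real.exp ((k:ℝ)*Real.log s) = s^k := by
      rw [Real.exp_nat_mul, Real.exp_log hs.1]
    have et : Real.exp ((k:ℝ)*x) = t^k := by rw [Real.exp_nat_mul, ex]
    have e3 : Real.exp (Real.log (w t) + x + (k:ℝ)*(Real.log s - x))
        = w t * t * (s^k / t^k) := by
      rw [show Real.log (w t) + x + (k:ℝ)*(Real.log s - x)
          = Real.log (w t) + x + ((k:ℝ)*Real.log s - (k:ℝ)*x) from by ring]
      rw [Real.exp_add, Real.exp_add, Real.exp_sub, Real.exp_log hwt, ex, es, et]
    have hsk : (0:ℝ) < s^k := pow_pos hs.1 _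
    have htk : (0:ℝ) < t^k := pow_pos ht.1 _
    rw [le_div_iff₀ hsk]
    calc t*w t/t^k * s^k = w t * t * (s^k/t^k) := by ring
      _ ≤ w s := by rw [← e3]; exact h9
  have htk : (0:ℝ) < t^k := pow_pos ht.1 _
  refine ⟨k, ?_⟩
  calc t * w t = (t * w t / t^k) * t^k := by field_simp
    _ ≤ M w k * t^k := mul_le_mul_of_nonneg_right hM htk.le

lemma sel_succ (hw : Wgt w) (j : ℕ) : sel hw (j+1) = nxt hw (sel hw j) := rfl

lemma Jpack (hw : Wgt w) (m : ℕ) : ∃ J, sel hw J ≤ m ∧ ∀ j, J < j → m < sel hw j := by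
  classical
  refine ⟨Nat.findGreatest (fun j => sel hw j ≤ m) m, ?_, ?_⟩
  · exact Nat.findGreatest_spec (P := fun j => sel hw j ≤ m) (Nat.zero_le m)
      (by show sel hw 0 ≤ m; rw [sel_zero]; exact Nat.zero_le m)
  · intro j hj
    rcases le_or_gt j m with h | h
    · exact lt_of_not_ge (Nat.findGreatest_is_greatest (P := fun j => sel hw j ≤ m) hj h)
    · exact lt_of_lt_of_le h (sel_ge hw j)

lemma chainL (hw : Wgt w) {x : ℝ} {m J : ℕ} (hm' : ∀ k < m, -x ≤ l w k)
    (hJ : sel hw J ≤ m) :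
    ∀ d j, j + d ≤ J → G w (sel hw j) + (sel hw j) * x + (d:ℝ)
      ≤ G w (sel hw (j+d)) + (sel hw (j+d)) * x := by
  intro d
  induction d with
  | zero => intro j _; simp
  | succ d ih =>
      intro j hjd
      have h1 := ih j (by omega)
      have hsel_le : sel hw (j+d+1) ≤ m :=
        le_trans ((sel_mono hw).monotone (show j+d+1 ≤ J by omega)) hJ
      have h2 := incr_left hw (p := sel hw (j+d)) (q := sel hw (j+d+1)) (m := m)
        hsel_le (sel_lt hw (j+d)) (nxt_spec hw (sel hw (j+d))).2 hm'
      have e : j + (d+1) = (j+d)+1 := by omega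
      rw [e]
      push_cast
      push_cast at h1
      linarith

lemma chainR (hw : Wgt w) {x : ℝ} {m J : ℕ} (hm : l w m < -x)
    (hJ2 : ∀ j, J < j → m < sel hw j) :
    ∀ d j, J < j → G w (sel hw (j+d)) + (sel hw (j+d)) * x + (d:ℝ)
      ≤ G w (sel hw j) + (sel hw j) * x := by
  intro d
  induction d with
  | zero => intro j _; simp
  | succ d ih =>
      intro j hj
      have h1 := ih j hj
      have hm_le : m ≤ sel hw (j+d) := (hJ2 (j+d) (by omega)).le
      have h2 := incr_right hw (p := sel hw (j+d)) (q := sel hw (j+d+1)) (m := m)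
        hm_le (sel_lt hw (j+d)) (nxt_spec hw (sel hw (j+d))).2 hm
      have e : j + (d+1) = (j+d)+1 := by omega
      rw [e]
      push_cast
      push_cast at h1
      linarith

lemma upper_bound (hw : Wgt w) {t : ℝ} (ht : t ∈ Set.Ioo (0:ℝ) 1) (N : ℕ) :
    ∑ k ∈ range N, a hw k * t ^ k ≤ 4 * w t := by
  classical
  set x := Real.log t with hxdef
  have hx : x < 0 := Real.log_neg ht.1 ht.2
  obtain ⟨m, hm', hm⟩ := pivot hw hx
  obtain ⟨J, hJ1, hJ2⟩ := Jpack hw m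
  have hEm : M w m * t ^ m ≤ w t := M_mul_le hw m ht
  have hEmpos : 0 < M w m * t^m := mul_pos (M_pos hw m) (pow_pos ht.1 m)
  have hterm : ∀ j, M w (sel hw j) * t ^ (sel hw j)
      ≤ (M w m * t ^ m) * (Real.exp (-(1:ℝ))) ^ (if j ≤ J then J - j else j - (J+1)) := by
    intro j
    rw [expform hw ht.1, expform hw ht.1, ← hxdef]
    rcases le_or_gt j J with h | h
    · rw [if_pos h]
      have h1 := chainL hw hm' hJ1 (J - j) j (by omega)
      have e : j + (J - j) = J := by omega
      rw [e] at h1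
      have h2 : G w (sel hw J) + (sel hw J) * x ≤ G w m + m * x := maxLk hw hm' hm _
      have h3 : G w (sel hw j) + (sel hw j) * x ≤ (G w m + m * x) - ((J - j : ℕ):ℝ) := by
        linarith
      calc Real.exp (G w (sel hw j) + (sel hw j) * x)
          ≤ Real.exp ((G w m + m * x) - ((J - j : ℕ):ℝ)) := Real.exp_le_exp.2 h3
        _ = Real.exp (G w m + m*x) * Real.exp (-(1:ℝ)) ^ (J - j) := by
            rw [show Real.exp (-(1:ℝ)) ^ (J-j)
                = Real.exp (((J-j : ℕ):ℝ) * (-1)) from (Real.exp_nat_mul _ _).symm,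
              ← Real.exp_add]
            congr 1; ring
    · rw [if_neg (by omega)]
      have h1 := chainR hw hm hJ2 (j - (J+1)) (J+1) (by omega)
      have e : (J+1) + (j - (J+1)) = j := by omega
      rw [e] at h1
      have h2 : G w (sel hw (J+1)) + (sel hw (J+1)) * x ≤ G w m + m * x := maxLk hw hm' hm _
      have h3 : G w (sel hw j) + (sel hw j) * x ≤ (G w m + m * x) - ((j - (J+1) : ℕ):ℝ) := by
        linarith
      calc Real.exp (G w (sel hw j) + (sel hw j) * x)
          ≤ Real.exp ((G w m + m * x) - ((j - (J+1) : ℕ):ℝ)) := Real.exp_le_exp.2 h3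
        _ = Real.exp (G w m + m*x) * Real.exp (-(1:ℝ)) ^ (j - (J+1)) := by
            rw [show Real.exp (-(1:ℝ)) ^ (j-(J+1))
                = Real.exp (((j-(J+1) : ℕ):ℝ) * (-1)) from (Real.exp_nat_mul _ _).symm,
              ← Real.exp_add]
            congr 1; ring
  have hstep1 : ∑ k ∈ range N, a hw k * t ^ k
      ≤ ∑ j ∈ range N, M w (sel hw j) * t ^ (sel hw j) := by
    have e1 : ∀ k, a hw k * t ^ k = if (∃ j, sel hw j = k) then M w k * t^k else 0 := by
      intro k
      by_cases h : ∃ j, sel hw j = k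
      · unfold a; rw [if_pos h, if_pos h]
      · unfold a; rw [if_neg h, if_neg h, zero_mul]
    calc ∑ k ∈ range N, a hw k * t^k
        = ∑ k ∈ (range N).filter (fun k => ∃ j, sel hw j = k), M w k * t^k := by
          rw [Finset.sum_filter]
          exact Finset.sum_congr rfl fun k _ => e1 k
      _ ≤ ∑ k ∈ (range N).image (sel hw), M w k * t^k := by
          apply Finset.sum_le_sum_of_subset_of_nonneg
          · intro k hk
            rw [Finset.mem_filter] at hk
            obtain ⟨hkN, j, hj⟩ := hk
            refine Finset.mem_image.2 ⟨j, Finset.mem_range.2 ?_, hj⟩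
            have h5 := sel_ge hw j
            have h6 := Finset.mem_range.1 hkN
            omega
          · intro k _ _
            exact mul_nonneg (M_pos hw k).le (pow_pos ht.1 k).le
      _ = ∑ j ∈ range N, M w (sel hw j) * t^(sel hw j) := by
          rw [Finset.sum_image (fun i _ j _ h => (sel_mono hw).injective h)]
  have hsum2 : ∑ j ∈ range N, (Real.exp (-(1:ℝ))) ^ (if j ≤ J then J - j else j - (J+1)) ≤ 4 := by
    rw [← Finset.sum_filter_add_sum_filter_not (range N) (fun j => j ≤ J)]
    have hA : ((range N).filter (fun j => j ≤ J)) = range (min N (J+1)) := by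
      ext j
      simp only [Finset.mem_filter, Finset.mem_range, lt_min_iff]
      omega
    have hB : ((range N).filter (fun j => ¬ j ≤ J)) = Finset.Ico (J+1) N := by
      ext j
      simp only [Finset.mem_filter, Finset.mem_range, Finset.mem_Ico, not_le]
      omega
    rw [hA, hB]
    have hA2 : ∑ j ∈ range (min N (J+1)),
        (Real.exp (-(1:ℝ))) ^ (if j ≤ J then J - j else j - (J+1)) ≤ 2 := by
      have e : ∀ j ∈ range (min N (J+1)),
          (Real.exp (-(1:ℝ))) ^ (if j ≤ J then J - j else j - (J+1))
          = (Real.exp (-(1:ℝ))) ^ (J - j) := by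
        intro j hj
        rw [if_pos (by have := Finset.mem_range.1 hj; omega)]
      rw [Finset.sum_congr rfl e]
      refine le_trans (sum_map_le (g := fun j => Real.exp (-(1:ℝ)) ^ (J - j))
        (f := fun i => Real.exp (-(1:ℝ)) ^ i) (a := min N (J+1)) (b := J+1)
        (fun j => J - j) ?_ ?_ ?_ ?_) (geo_bound (J+1))
      · intro i hi j hj hij
        omega
      · intro i hi
        show J - i < J + 1
        omega
      · intro j _; positivity
      · intro i hi; exact le_refl _
    have hB2 : ∑ j ∈ Finset.Ico (J+1) N,
        (Real.exp (-(1:ℝ))) ^ (if j ≤ J then J - j else j - (J+1)) ≤ 2 := by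
      rw [Finset.sum_Ico_eq_sum_range]
      have e : ∀ i ∈ range (N - (J+1)),
          (Real.exp (-(1:ℝ))) ^ (if (J+1+i) ≤ J then J - (J+1+i) else (J+1+i) - (J+1))
          = (Real.exp (-(1:ℝ)))^i := by
        intro i _
        rw [if_neg (by omega)]
        congr 1
        omega
      rw [Finset.sum_congr rfl e]
      exact geo_bound _
    linarith
  calc ∑ k ∈ range N, a hw k * t ^ k
      ≤ ∑ j ∈ range N, M w (sel hw j) * t ^ (sel hw j) := hstep1
    _ ≤ ∑ j ∈ range N, (M w m * t^m) * (Real.exp (-(1:ℝ))) ^ (if j ≤ J then J - j else j - (J+1)) :=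
        Finset.sum_le_sum fun j _ => hterm j
    _ = (M w m * t^m) * ∑ j ∈ range N, (Real.exp (-(1:ℝ))) ^ (if j ≤ J then J - j else j - (J+1)) := by
        rw [Finset.mul_sum]
    _ ≤ (M w m * t^m) * 4 := mul_le_mul_of_nonneg_left hsum2 hEmpos.le
    _ ≤ 4 * w t := by nlinarith

lemma lower_sel (hw : Wgt w) {t : ℝ} (ht : t ∈ Set.Ioo (0:ℝ) 1) (h1 : Real.exp (-1) ≤ t) :
    ∃ k, (∃ j, sel hw j = k) ∧ Real.exp (-(1 + l w 0)) * (t * w t) ≤ M w k * t ^ k := by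
  classical
  set x := Real.log t with hxdef
  have hx : x < 0 := Real.log_neg ht.1 ht.2
  obtain ⟨m, hm', hm⟩ := pivot hw hx
  obtain ⟨k₀, hk₀⟩ := chord hw ht h1
  have hmax : ∀ k, M w k * t^k ≤ M w m * t^m := by
    intro k
    rw [expform hw ht.1, expform hw ht.1, ← hxdef]
    exact Real.exp_le_exp.2 (maxLk hw hm' hm k)
  have hEm : t * w t ≤ M w m * t^m := le_trans hk₀ (hmax k₀)
  have hEexp : (0:ℝ) < Real.exp (-(1 + l w 0)) := Real.exp_pos _
  have hexple : Real.exp (-(1 + l w 0)) ≤ 1 := by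
    rw [Real.exp_le_one_iff]
    have := l_nonneg hw 0
    linarith
  have htw : 0 ≤ t * w t := mul_nonneg ht.1.le (w_pos hw ht).le
  have hgoal : ∀ k, (G w m + m*x) - (G w k + k*x) ≤ 1 + l w 0 →
      Real.exp (-(1 + l w 0)) * (t * w t) ≤ M w k * t^k := by
    intro k hk
    have e1 : M w m * t^m = Real.exp (G w m + m*x) := by
      rw [expform hw ht.1, ← hxdef]
    have e2 : M w k * t^k = Real.exp (G w k + k*x) := by
      rw [expform hw ht.1, ← hxdef]
    have h3 : (G w m + m*x) - (1 + l w 0) ≤ G w k + k*x := by linarith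
    calc Real.exp (-(1 + l w 0)) * (t * w t)
        ≤ Real.exp (-(1 + l w 0)) * (M w m * t^m) :=
          mul_le_mul_of_nonneg_left hEm hEexp.le
      _ = Real.exp ((G w m + m*x) - (1 + l w 0)) := by
          rw [e1, ← Real.exp_add]; congr 1; ring
      _ ≤ Real.exp (G w k + k*x) := Real.exp_le_exp.2 h3
      _ = M w k * t^k := e2.symm
  by_cases hselm : ∃ j, sel hw j = m
  · refine ⟨m, hselm, hgoal m (by
      have := l_nonneg hw 0
      linarith)⟩
  · obtain ⟨J, hJ1, hJ2⟩ := Jpack hw m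
    set p := sel hw J with hpdef
    set q := sel hw (J+1) with hqdef
    have hpm : p < m := lt_of_le_of_ne hJ1 (fun h => hselm ⟨J, h⟩)
    have hmq : m < q := hJ2 (J+1) (by omega)
    have hq_nxt : nxt hw p = q := rfl
    have hmin : P w p (q-1) < 1 := by
      apply nxt_min hw p (q-1) (by omega)
      rw [hq_nxt]; omega
    have hdef := deficiency hw hpm hmq hmin hm' hm
    rcases hdef with h | h
    · exact ⟨p, ⟨J, rfl⟩, hgoal p h⟩
    · exact ⟨q, ⟨J+1, rfl⟩, hgoal q h⟩

end LCWProof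

/-- Every log-convex weight on `[0,1)` is equivalent to a power series with
nonnegative coefficients convergent on `[0,1)`. -/
theorem logConvexWeight_equiv_power_series (w : ℝ → ℝ) (hw : IsLogConvexWeight w) :
    ∃ a : ℕ → ℝ, (∀ k, 0 ≤ a k) ∧
      (∀ t ∈ Set.Ico (0:ℝ) 1, Summable (fun k => a k * t ^ k)) ∧
      ∃ C₁ > (0:ℝ), ∃ C₂ > (0:ℝ), ∀ t ∈ Set.Ico (0:ℝ) 1,
        C₁ * w t ≤ ∑' k, a k * t ^ k ∧ (∑' k, a k * t ^ k) ≤ C₂ * w t := by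
  classical
  obtain ⟨hcont, hmono, hpos, hcvx⟩ := hw
  have hw0 : 0 < w 0 := hpos 0 (by constructor <;> norm_num)
  by_cases hbdd : ∃ B : ℝ, ∀ t ∈ Set.Ico (0:ℝ) 1, w t ≤ B
  · -- bounded case : a constant works
    obtain ⟨B, hB⟩ := hbdd
    set B' := max B (w 0) with hB'def
    have hB'pos : 0 < B' := lt_of_lt_of_le hw0 (le_max_right _ _)
    refine ⟨fun k => if k = 0 then B' else 0, ?_, ?_, 1, one_pos, B'/(w 0), by positivity, ?_⟩
    · intro k
      show (0:ℝ) ≤ if k = 0 then B' else 0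
      by_cases h : k = 0
      · rw [if_pos h]; exact hB'pos.le
      · rw [if_neg h]
    · intro t _
      apply summable_of_ne_finset_zero (s := {0})
      intro k hk
      rw [Finset.mem_singleton] at hk
      show (if k = 0 then B' else 0) * t ^ k = 0
      rw [if_neg hk, zero_mul]
    · intro t ht
      have htsum : ∑' k, (if k = 0 then B' else 0) * t^k = B' := by
        rw [tsum_eq_single 0]
        · rw [if_pos rfl, pow_zero, mul_one]
        · intro k hk
          rw [if_neg hk, zero_mul]
      rw [htsum]
      constructor
      · have h1 : w t ≤ B := hB t ht
        have h2 : w t ≤ B' := le_trans h1 (le_max_left _ _)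
        linarith
      · have h2 : w 0 ≤ w t := hmono (by constructor <;> norm_num) ht ht.1
        rw [div_mul_eq_mul_div, le_div_iff₀ hw0]
        nlinarith
  · -- unbounded case
    push_neg at hbdd
    have hWgt : LCWProof.Wgt w := ⟨hmono, hpos, hcvx, hbdd⟩
    have ha_nonneg := LCWProof.a_nonneg hWgt
    have hsummable : ∀ t ∈ Set.Ico (0:ℝ) 1, Summable (fun k => LCWProof.a hWgt k * t^k) := by
      intro t ht
      rcases eq_or_lt_of_le ht.1 with h0 | h0
      · apply summable_of_ne_finset_zero (s := {0})
        intro k hk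
        rw [Finset.mem_singleton] at hk
        rw [← h0, zero_pow hk, mul_zero]
      · have hIoo : t ∈ Set.Ioo (0:ℝ) 1 := ⟨h0, ht.2⟩
        apply summable_of_sum_range_le (c := 4 * w t)
        · intro n; exact mul_nonneg (ha_nonneg n) (pow_nonneg (le_of_lt h0) n)
        · intro n; exact LCWProof.upper_bound hWgt hIoo n
    refine ⟨LCWProof.a hWgt, ha_nonneg, hsummable, ?_⟩
    have hexm1 : Real.exp (-1 : ℝ) ∈ Set.Ico (0:ℝ) 1 :=
      ⟨(Real.exp_pos _).le, Real.exp_lt_one_iff.mpr (by norm_num)⟩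
    have hwe : 0 < w (Real.exp (-1)) := hpos _ hexm1
    have hw2 : 0 < w (1/2) := hpos _ (by constructor <;> norm_num)
    set C₁ := min (Real.exp (-(2 + LCWProof.l w 0))) (w 0 / w (Real.exp (-1))) with hC₁def
    set C₂ := (4:ℝ) + w (1/2) / w 0 with hC₂def
    have hC₁pos : 0 < C₁ := lt_min (Real.exp_pos _) (by positivity)
    have hC₂pos : 0 < C₂ := by positivity
    have hl0 := LCWProof.l_nonneg hWgt 0
    refine ⟨C₁, hC₁pos, C₂, hC₂pos, ?_⟩
    intro t ht
    rcases eq_or_lt_of_le ht.1 with h0 | h0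
    · -- t = 0
      have htsum : ∑' k, LCWProof.a hWgt k * t^k = LCWProof.M w 0 := by
        rw [tsum_eq_single 0]
        · rw [← h0, pow_zero, mul_one, LCWProof.a_zero hWgt]
        · intro k hk
          rw [← h0, zero_pow hk, mul_zero]
      rw [htsum, ← h0]
      constructor
      · have h1 : w 0 ≤ LCWProof.M w 0 := LCWProof.M_ge hWgt 0
        have h2 : C₁ ≤ 1 := le_trans (min_le_left _ _)
          (by rw [Real.exp_le_one_iff]; linarith)
        nlinarith
      · have h1 : LCWProof.M w 0 * (1/2:ℝ)^0 ≤ w (1/2) :=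
          LCWProof.M_mul_le hWgt 0 (by constructor <;> norm_num)
        rw [pow_zero, mul_one] at h1
        rw [hC₂def]
        have h3 : w (1/2)/w 0 * w 0 = w (1/2) := by field_simp
        nlinarith
    · have hIoo : t ∈ Set.Ioo (0:ℝ) 1 := ⟨h0, ht.2⟩
      have hsum := hsummable t ht
      have hwt : 0 < w t := hpos t ht
      constructor
      · rcases le_or_gt (Real.exp (-1)) t with hT | hT
        · obtain ⟨k, hksel, hk⟩ := LCWProof.lower_sel hWgt hIoo hT
          have hterm : LCWProof.a hWgt k * t^k = LCWProof.M w k * t^k := by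
            unfold LCWProof.a
            rw [if_pos hksel]
          have hle : LCWProof.a hWgt k * t^k ≤ ∑' k, LCWProof.a hWgt k * t^k :=
            Summable.le_tsum hsum k (fun b _ => mul_nonneg (ha_nonneg b) (pow_nonneg h0.le b))
          have h3 : C₁ * w t ≤ Real.exp (-(1 + LCWProof.l w 0)) * (t * w t) := by
            have h4 : C₁ ≤ Real.exp (-(2 + LCWProof.l w 0)) := min_le_left _ _
            have h5 : Real.exp (-(2 + LCWProof.l w 0))
                = Real.exp (-(1 + LCWProof.l w 0)) * Real.exp (-1) := by
              rw [← Real.exp_add]; congr 1; ring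
            have h6 : Real.exp (-(2 + LCWProof.l w 0)) * w t
                ≤ Real.exp (-(1 + LCWProof.l w 0)) * (t * w t) := by
              rw [h5, mul_assoc]
              apply mul_le_mul_of_nonneg_left _ (Real.exp_pos (-(1 + LCWProof.l w 0))).le
              exact mul_le_mul_of_nonneg_right hT hwt.le
            calc C₁ * w t ≤ Real.exp (-(2 + LCWProof.l w 0)) * w t :=
                  mul_le_mul_of_nonneg_right h4 hwt.le
              _ ≤ _ := h6
          calc C₁ * w t ≤ Real.exp (-(1 + LCWProof.l w 0)) * (t * w t) := h3
            _ ≤ LCWProof.M w k * t^k := hk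
            _ = LCWProof.a hWgt k * t^k := hterm.symm
            _ ≤ ∑' k, LCWProof.a hWgt k * t^k := hle
        · have hle : LCWProof.a hWgt 0 * t^0 ≤ ∑' k, LCWProof.a hWgt k * t^k :=
            Summable.le_tsum hsum 0 (fun b _ => mul_nonneg (ha_nonneg b) (pow_nonneg h0.le b))
          have h2 : LCWProof.a hWgt 0 * t^0 = LCWProof.M w 0 := by
            rw [LCWProof.a_zero hWgt, pow_zero, mul_one]
          have h3 : w t ≤ w (Real.exp (-1)) := hmono ht hexm1 hT.le
          have h4 : C₁ ≤ w 0 / w (Real.exp (-1)) := min_le_right _ _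
          have h5 : w 0 ≤ LCWProof.M w 0 := LCWProof.M_ge hWgt 0
          calc C₁ * w t ≤ (w 0 / w (Real.exp (-1))) * w t :=
                mul_le_mul_of_nonneg_right h4 hwt.le
            _ ≤ (w 0 / w (Real.exp (-1))) * w (Real.exp (-1)) :=
                mul_le_mul_of_nonneg_left h3 (by positivity)
            _ = w 0 := by field_simp
            _ ≤ LCWProof.M w 0 := h5
            _ = LCWProof.a hWgt 0 * t^0 := h2.symm
            _ ≤ ∑' k, LCWProof.a hWgt k * t^k := hle
      · have h1 : ∑' k, LCWProof.a hWgt k * t^k ≤ 4 * w t :=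
          Real.tsum_le_of_sum_range_le
            (fun n => mul_nonneg (ha_nonneg n) (pow_nonneg h0.le n))
            (fun n => LCWProof.upper_bound hWgt hIoo n)
        calc ∑' k, LCWProof.a hWgt k * t^k ≤ 4 * w t := h1
          _ ≤ C₂ * w t := by
              rw [hC₂def]
              have h7 : 0 ≤ w (1/2) / w 0 := by positivity
              nlinarith
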